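/- arXiv:1210.5225 — 5 statements merged into one kernel-verified Lean document; each statement's English description precedes it below -/
import Mathlib

section
/- Let D be an N×N positive definite diagonal matrix, c ∈ ℝ^N, γ > 0, and K ∈ {0,…,N}. There exists x with (x−c)ᵀD(x−c) ≤ γ having at least K zero components if and only if the sum of the K smallest values among {D_nn c_n² : n = 1,…,N} is at most γ. -/
open Matrix

/-- Sum of the `K` smallest elements of a finite sequence, as the infimum of sums over
subsets of cardinality `K`. -/
noncomputable def sumKSmallest {N : ℕ} (a : Fin N → ℝ) (K : ℕ) : ℝ :=
  sInf {s : ℝ | ∃ T : Finset (Fin N), T.card = K ∧ s = ∑ n ∈ T, a n}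

/-- For a positive definite diagonal matrix `D = diagonal d`, the ellipsoid
`(x−c)ᵀD(x−c) ≤ γ` contains a point with at least `K` zero components iff the sum of the
`K` smallest values `d_n c_n²` is at most `γ`. -/
theorem diagonal_ellipsoid_K_zeros_iff {N : ℕ}
    (d : Fin N → ℝ) (hd : ∀ n, 0 < d n) (c : Fin N → ℝ) (γ : ℝ) (hγ : 0 < γ)
    (K : ℕ) (hK : K ≤ N) :
    (∃ x : Fin N → ℝ, (x - c) ⬝ᵥ (Matrix.diagonal d) *ᵥ (x - c) ≤ γ ∧
        ∃ T : Finset (Fin N), T.card = K ∧ ∀ n ∈ T, x n = 0) ↔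
      sumKSmallest (fun n => d n * c n ^ 2) K ≤ γ := by
  set a : Fin N → ℝ := fun n => d n * c n ^ 2 with ha
  set S : Set ℝ := {s : ℝ | ∃ T : Finset (Fin N), T.card = K ∧ s = ∑ n ∈ T, a n} with hS
  have hfin : S.Finite := by
    apply Set.Finite.subset (Set.finite_range (fun T : Finset (Fin N) => ∑ n ∈ T, a n))
    rintro s ⟨T, -, rfl⟩
    exact ⟨T, rfl⟩
  have hne : S.Nonempty := by
    obtain ⟨T, -, hT⟩ := Finset.exists_subset_card_eq (s := (Finset.univ : Finset (Fin N))) (n := K)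
      (by simpa using hK)
    exact ⟨∑ n ∈ T, a n, T, hT, rfl⟩
  have hquad : ∀ x : Fin N → ℝ,
      (x - c) ⬝ᵥ (Matrix.diagonal d) *ᵥ (x - c) = ∑ n, d n * (x n - c n) ^ 2 := by
    intro x
    simp only [dotProduct, mulVec_diagonal, Pi.sub_apply]
    exact Finset.sum_congr rfl fun n _ => by ring
  constructor
  · rintro ⟨x, hxγ, T, hTcard, hTzero⟩
    have h1 : ∑ n ∈ T, a n ≤ ∑ n, d n * (x n - c n) ^ 2 := by
      calc ∑ n ∈ T, a n = ∑ n ∈ T, d n * (x n - c n) ^ 2 := by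
            refine Finset.sum_congr rfl fun n hn => ?_
            rw [hTzero n hn]; ring
        _ ≤ ∑ n, d n * (x n - c n) ^ 2 := by
            refine Finset.sum_le_sum_of_subset_of_nonneg (Finset.subset_univ T)
              fun n _ _ => ?_
            exact mul_nonneg (hd n).le (sq_nonneg _)
    have hle : sInf S ≤ ∑ n ∈ T, a n :=
      csInf_le hfin.bddBelow ⟨T, hTcard, rfl⟩
    calc sumKSmallest a K ≤ ∑ n ∈ T, a n := hle
      _ ≤ ∑ n, d n * (x n - c n) ^ 2 := h1
      _ = _ := (hquad x).symm
      _ ≤ γ := hxγ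
  · intro hle
    have hmem : sInf S ∈ S := hne.csInf_mem hfin
    obtain ⟨T, hTcard, hTeq⟩ := hmem
    classical
    refine ⟨fun n => if n ∈ T then 0 else c n, ?_, T, hTcard, fun n hn => by simp [hn]⟩
    rw [hquad]
    have : ∑ n, d n * ((if n ∈ T then 0 else c n) - c n) ^ 2 = ∑ n ∈ T, a n := by
      rw [← Finset.sum_subset (Finset.subset_univ T)]
      · refine Finset.sum_congr rfl fun n hn => by simp [hn, ha]
      · intro n _ hn; simp [hn]
    rw [this, ← hTeq]
    exact hle
end

section
/- Let Q be an N×N symmetric positive definite matrix whose smallest eigenvalue λ_min has a unit-norm eigenvector v all of whose components have magnitude 1/√N. Then for every diagonal matrix D with 0 ⪯ D ⪯ Q, the sum of the K smallest diagonal entries of D is at most K·λ_min, for each K = 1,…,N. -/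
open Matrix

/-- If the smallest eigenvalue `lmin` of a symmetric positive definite `Q` has
a unit-norm eigenvector all of whose components have magnitude `1/√N`, then for every
diagonal `D` with `0 ⪯ D ⪯ Q`, the sum of the `K` smallest diagonal entries of `D` is at
most `K·lmin`. -/
theorem sum_smallest_diag_le_of_equimagnitude_eigenvector {N : ℕ}
    (Q : Matrix (Fin N) (Fin N) ℝ) (hQ : Q.PosDef) (hQsymm : Q.IsSymm)
    (lmin : ℝ) (v : Fin N → ℝ)
    (hv_eig : Q *ᵥ v = lmin • v)
    (hv_norm : v ⬝ᵥ v = 1)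
    (hv_mag : ∀ n, |v n| = 1 / Real.sqrt N)
    (h_min : ∀ x : Fin N → ℝ, lmin * (x ⬝ᵥ x) ≤ x ⬝ᵥ Q *ᵥ x)
    (d : Fin N → ℝ)
    (hd_psd : (Matrix.diagonal d).PosSemidef)
    (hdQ : (Q - Matrix.diagonal d).PosSemidef)
    (K : ℕ) (hK1 : 1 ≤ K) (hKN : K ≤ N) :
    sumKSmallest d K ≤ K * lmin := by
  have hN : 0 < N := lt_of_lt_of_le hK1 hKN
  -- diagonal entries are nonnegative
  have hd0 : ∀ n, 0 ≤ d n := by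
    intro n
    have := hd_psd.dotProduct_mulVec_nonneg (Pi.single n 1)
    simpa [mulVec_diagonal, dotProduct, Pi.single_apply, mul_ite] using this
  -- each v n squared is 1/N
  have hv2 : ∀ n, v n ^ 2 = 1 / N := by
    intro n
    have := hv_mag n
    have h2 : (v n) ^ 2 = (|v n|) ^ 2 := (sq_abs _).symm
    rw [h2, this, div_pow, one_pow, Real.sq_sqrt (Nat.cast_nonneg N)]
  -- total sum bound: ∑ d ≤ N * lmin
  have htot : ∑ n, d n ≤ N * lmin := by
    have h1 := hdQ.dotProduct_mulVec_nonneg v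
    have hQv : v ⬝ᵥ Q *ᵥ v = lmin := by
      rw [hv_eig, dotProduct_smul, smul_eq_mul, hv_norm, mul_one]
    have hDv : v ⬝ᵥ (Matrix.diagonal d *ᵥ v) = (∑ n, d n) / N := by
      simp only [mulVec_diagonal, dotProduct]
      rw [Finset.sum_div]
      congr 1; ext n
      have : v n * (d n * v n) = d n * v n ^ 2 := by ring
      rw [this, hv2 n]; ring
    have h2 : v ⬝ᵥ (Matrix.diagonal d *ᵥ v) ≤ v ⬝ᵥ Q *ᵥ v := by
      have : (0:ℝ) ≤ v ⬝ᵥ ((Q - Matrix.diagonal d) *ᵥ v) := by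
        simpa using h1
      rw [sub_mulVec, dotProduct_sub] at this
      linarith
    rw [hDv, hQv] at h2
    have hNpos : (0:ℝ) < N := by exact_mod_cast hN
    rw [div_le_iff₀ hNpos] at h2
    linarith
  -- choose the minimizing subset of card K
  obtain ⟨T, hTmem, hTmin⟩ := Finset.exists_min_image
    ((Finset.univ : Finset (Fin N)).powersetCard K) (fun T => ∑ n ∈ T, d n)
    (by
      rw [Finset.powersetCard_nonempty]
      simpa using hKN)
  rw [Finset.mem_powersetCard_univ] at hTmem
  -- T has min property: entries in T are ≤ entries outside
  have hswap : ∀ i ∈ T, ∀ j ∉ T, d i ≤ d j := by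
    intro i hi j hj
    have hT' : (insert j (T.erase i)).card = K := by
      rw [Finset.card_insert_of_notMem (fun h => hj (Finset.mem_of_mem_erase h)),
        Finset.card_erase_of_mem hi, hTmem]
      omega
    have := hTmin (insert j (T.erase i)) (by rw [Finset.mem_powersetCard_univ]; exact hT')
    rw [Finset.sum_insert (fun h => hj (Finset.mem_of_mem_erase h)),
      Finset.sum_erase_eq_sub hi] at this
    linarith
  -- N * ∑_T d ≤ K * ∑ d
  have hkey : (N:ℝ) * ∑ n ∈ T, d n ≤ K * ∑ n, d n := by
    have h1 : ∑ i ∈ T, ∑ j ∈ Tᶜ, d i ≤ ∑ i ∈ T, ∑ j ∈ Tᶜ, d j := by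
      apply Finset.sum_le_sum
      intro i hi
      apply Finset.sum_le_sum
      intro j hj
      exact hswap i hi j (by simpa using hj)
    have hcardc : Tᶜ.card = N - K := by
      rw [Finset.card_compl, hTmem]; simp
    have hL : ∑ i ∈ T, ∑ j ∈ Tᶜ, d i = ((N:ℝ) - K) * ∑ i ∈ T, d i := by
      simp only [Finset.sum_const, nsmul_eq_mul, hcardc]
      rw [← Finset.mul_sum, Nat.cast_sub hKN]
    have hR : ∑ i ∈ T, ∑ j ∈ Tᶜ, d j = (K:ℝ) * ∑ j ∈ Tᶜ, d j := by
      rw [Finset.sum_const, hTmem, nsmul_eq_mul]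
    rw [hL, hR] at h1
    have hsplit : ∑ n, d n = ∑ n ∈ T, d n + ∑ n ∈ Tᶜ, d n := by
      rw [Finset.sum_add_sum_compl]
    rw [hsplit]
    nlinarith [h1]
  have hfinal : ∑ n ∈ T, d n ≤ K * lmin := by
    have hNpos : (0:ℝ) < N := by exact_mod_cast hN
    have hK0 : (0:ℝ) ≤ K := Nat.cast_nonneg K
    nlinarith [htot, hkey]
  -- conclude via sInf
  have hmem : (∑ n ∈ T, d n) ∈ {s : ℝ | ∃ T' : Finset (Fin N), T'.card = K ∧ s = ∑ n ∈ T', d n} :=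
    ⟨T, hTmem, rfl⟩
  have hbdd : BddBelow {s : ℝ | ∃ T' : Finset (Fin N), T'.card = K ∧ s = ∑ n ∈ T', d n} := by
    refine ⟨0, ?_⟩
    rintro s ⟨T', _, rfl⟩
    exact Finset.sum_nonneg fun n _ => hd0 n
  exact le_trans (csInf_le hbdd hmem) hfinal
end

section
/- Let Q be an N×N symmetric positive definite matrix whose smallest eigenvalue λ_min has a unit-norm eigenvector with all components of magnitude 1/√N, and let c ∈ ℝ^N have all components of magnitude 1. Then the maximum of S_K({D_nn c_n²}) over diagonal D with 0 ⪯ D ⪯ Q equals K·λ_min. -/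
open Matrix

lemma sumKSmallest_le {N : ℕ} (a : Fin N → ℝ) (K : ℕ) (T : Finset (Fin N))
    (hT : T.card = K) : sumKSmallest a K ≤ ∑ n ∈ T, a n := by
  apply csInf_le
  · apply Set.Finite.bddBelow
    apply Set.Finite.subset (Set.finite_range (fun T : Finset (Fin N) => ∑ n ∈ T, a n))
    rintro s ⟨T, _, rfl⟩
    exact ⟨T, rfl⟩
  · exact ⟨T, hT, rfl⟩

lemma sumKSmallest_const {N : ℕ} (l : ℝ) (K : ℕ) (hKN : K ≤ N) :
    sumKSmallest (fun _ : Fin N => l) K = K * l := by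
  obtain ⟨T, _, hT⟩ := Finset.exists_subset_card_eq
    (show K ≤ (Finset.univ : Finset (Fin N)).card by simpa using hKN)
  apply le_antisymm
  · calc sumKSmallest (fun _ : Fin N => l) K ≤ ∑ _ ∈ T, l := sumKSmallest_le _ K T hT
    _ = K * l := by rw [Finset.sum_const, hT, nsmul_eq_mul]
  · refine le_csInf ⟨∑ _ ∈ T, l, T, hT, rfl⟩ ?_
    rintro s ⟨T', hT', rfl⟩
    rw [Finset.sum_const, hT', nsmul_eq_mul]

/-- Under the equal-magnitude-eigenvector assumption and `|c_n| = 1`, the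
maximum of `S_K({D_nn c_n²})` over diagonal `D` with `0 ⪯ D ⪯ Q` equals `K·λ_min(Q)`. -/
theorem max_sumKSmallest_eq_K_lambda_min {N : ℕ}
    (Q : Matrix (Fin N) (Fin N) ℝ) (hQ : Q.PosDef) (hQsymm : Q.IsSymm)
    (lmin : ℝ) (v : Fin N → ℝ)
    (hv_eig : Q *ᵥ v = lmin • v)
    (hv_norm : v ⬝ᵥ v = 1)
    (hv_mag : ∀ n, |v n| = 1 / Real.sqrt N)
    (h_min : ∀ x : Fin N → ℝ, lmin * (x ⬝ᵥ x) ≤ x ⬝ᵥ Q *ᵥ x)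
    (c : Fin N → ℝ) (hc : ∀ n, |c n| = 1)
    (K : ℕ) (hK1 : 1 ≤ K) (hKN : K ≤ N) :
    IsGreatest {s : ℝ | ∃ d : Fin N → ℝ, (Matrix.diagonal d).PosSemidef ∧
        (Q - Matrix.diagonal d).PosSemidef ∧
        s = sumKSmallest (fun n => d n * c n ^ 2) K}
      (K * lmin) := by
  have hN : 0 < N := lt_of_lt_of_le hK1 hKN
  have hc2 : ∀ n, c n ^ 2 = 1 := fun n => by
    rw [← sq_abs, hc n, one_pow]
  have hv_ne : v ≠ 0 := by
    intro h
    rw [h] at hv_norm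
    simp [dotProduct] at hv_norm
  have hvQv : v ⬝ᵥ Q *ᵥ v = lmin := by
    rw [hv_eig, dotProduct_smul, smul_eq_mul, hv_norm, mul_one]
  have hl_pos : 0 < lmin := by
    have := hQ.dotProduct_mulVec_pos hv_ne
    rwa [star_trivial, hvQv] at this
  have hv_sq : ∀ n, v n ^ 2 = 1 / N := fun n => by
    rw [← sq_abs, hv_mag n, div_pow, one_pow, Real.sq_sqrt (Nat.cast_nonneg N)]
  -- quadratic form of diagonal matrices
  have hdiag_form : ∀ (d : Fin N → ℝ) (x : Fin N → ℝ),
      x ⬝ᵥ (Matrix.diagonal d) *ᵥ x = ∑ n, d n * x n ^ 2 := by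
    intro d x
    simp [dotProduct, mulVec_diagonal]
    congr 1; ext n; ring
  constructor
  · -- membership: take d = constant lmin
    refine ⟨fun _ => lmin, ?_, ?_, ?_⟩
    · rw [posSemidef_diagonal_iff]
      exact fun _ => hl_pos.le
    · refine PosSemidef.of_dotProduct_mulVec_nonneg (hQ.1.sub (isHermitian_diagonal _)) fun x => ?_
      rw [star_trivial, sub_mulVec, dotProduct_sub, hdiag_form, sub_nonneg]
      calc ∑ n, lmin * x n ^ 2 = lmin * (x ⬝ᵥ x) := by
            simp only [dotProduct, Finset.mul_sum]
            exact Finset.sum_congr rfl fun n _ => by ring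
        _ ≤ x ⬝ᵥ Q *ᵥ x := h_min x
    · have : (fun n : Fin N => lmin * c n ^ 2) = fun _ => lmin := by
        ext n; rw [hc2 n, mul_one]
      rw [this, sumKSmallest_const lmin K hKN]
  · -- upper bound
    rintro s ⟨d, hd1, hd2, rfl⟩
    have hfun : (fun n : Fin N => d n * c n ^ 2) = d := by
      ext n; rw [hc2 n, mul_one]
    rw [hfun]
    -- total sum bound
    have hsum : ∑ n, d n ≤ N * lmin := by
      have h0 := hd2.dotProduct_mulVec_nonneg v
      rw [star_trivial, sub_mulVec, dotProduct_sub, hdiag_form, sub_nonneg, hvQv] at h0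
      have : ∑ n, d n * v n ^ 2 = (∑ n, d n) / N := by
        rw [Finset.sum_div]
        congr 1; ext n; rw [hv_sq n]; ring
      rw [this, div_le_iff₀ (by positivity)] at h0
      linarith [h0]
    -- sorted version of d
    set σ := Tuple.sort d with hσ
    have hmono : Monotone (d ∘ σ) := Tuple.monotone_sort d
    set T0 : Finset (Fin N) := Finset.univ.map (Fin.castLEEmb hKN) with hT0
    have hT0card : T0.card = K := by simp [hT0]
    have hT0mem : ∀ i : Fin N, i ∈ T0 ↔ (i : ℕ) < K := by
      intro i
      simp only [hT0, Finset.mem_map, Finset.mem_univ, true_and]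
      constructor
      · rintro ⟨j, rfl⟩; exact j.isLt
      · intro h; exact ⟨⟨i, h⟩, rfl⟩
    set T : Finset (Fin N) := T0.image σ with hT
    have hTcard : T.card = K := by
      rw [hT, Finset.card_image_of_injective _ σ.injective, hT0card]
    refine le_trans (sumKSmallest_le d K T hTcard) ?_
    rw [hT, Finset.sum_image (fun a _ b _ h => σ.injective h)]
    -- pivot element
    have hKm1 : K - 1 < N := lt_of_lt_of_le (Nat.sub_lt hK1 one_pos) hKN
    set t := d (σ ⟨K - 1, hKm1⟩) with ht
    have hA : ∑ i ∈ T0, d (σ i) ≤ K * t := by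
      have := Finset.sum_le_card_nsmul T0 (fun i => d (σ i)) t (by
        intro i hi
        rw [hT0mem] at hi
        exact hmono (show i ≤ ⟨K - 1, hKm1⟩ by
          simp only [Fin.le_def, Fin.val_mk]; omega))
      rwa [hT0card, nsmul_eq_mul] at this
    have hB : ((N : ℝ) - K) * t ≤ ∑ i ∈ T0ᶜ, d (σ i) := by
      have hcc : (T0ᶜ).card = N - K := by
        rw [Finset.card_compl, hT0card, Fintype.card_fin]
      have := Finset.card_nsmul_le_sum T0ᶜ (fun i => d (σ i)) t (by
        intro i hi
        rw [Finset.mem_compl, hT0mem, not_lt] at hi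
        exact hmono (show (⟨K - 1, hKm1⟩ : Fin N) ≤ i by
          simp only [Fin.le_def, Fin.val_mk]; omega))
      rw [hcc, nsmul_eq_mul] at this
      calc ((N : ℝ) - K) * t = ((N - K : ℕ) : ℝ) * t := by
            rw [Nat.cast_sub hKN]
        _ ≤ _ := this
    have hAB : ∑ i ∈ T0, d (σ i) + ∑ i ∈ T0ᶜ, d (σ i) = ∑ n, d n := by
      rw [Finset.sum_add_sum_compl]
      exact Equiv.sum_comp σ d
    have hNK : (0 : ℝ) ≤ (N : ℝ) - K := by
      have := (Nat.cast_le (α := ℝ)).mpr hKN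
      linarith
    have hK0 : (0 : ℝ) ≤ K := Nat.cast_nonneg K
    have hNpos : (0 : ℝ) < N := Nat.cast_pos.mpr hN
    nlinarith [mul_le_mul_of_nonneg_left hA hNK,
      mul_le_mul_of_nonneg_left hB hK0]
end

section
/- Let Q be an N×N symmetric positive definite matrix, c ∈ ℝ^N, γ > 0, and suppose c_n² / (Q⁻¹)_nn ≤ γ for all n. Then there exists a feasible point x of the ellipsoid (x−c)ᵀQ(x−c) ≤ γ, namely x = θc with θ = 1 − √(γ / cᵀQc) (assuming cᵀQc > γ), whose weighted ℓ¹ cost Σ_n |x_n| / (√(γ(Q⁻¹)_nn) + |c_n|) is at most θN/2. -/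
open Matrix

/-- Proposition 1: With `c_n²/(Q⁻¹)_nn ≤ γ` for all `n` and `cᵀQc > γ`, the
point `x = θc` with `θ = 1 − √(γ/cᵀQc)` is feasible for the ellipsoid and its weighted
ℓ¹ cost is at most `θN/2`. -/
theorem continuous_relaxation_absolute_upper_bound {N : ℕ}
    (Q : Matrix (Fin N) (Fin N) ℝ) (hQ : Q.PosDef) (hQsymm : Q.IsSymm)
    (c : Fin N → ℝ) (γ : ℝ) (hγ : 0 < γ)
    (h_feas : ∀ n, c n ^ 2 / (Q⁻¹) n n ≤ γ)
    (h_out : γ < c ⬝ᵥ Q *ᵥ c) :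
    (((1 - Real.sqrt (γ / (c ⬝ᵥ Q *ᵥ c))) • c - c) ⬝ᵥ
        Q *ᵥ ((1 - Real.sqrt (γ / (c ⬝ᵥ Q *ᵥ c))) • c - c) ≤ γ) ∧
      (∑ n, |(1 - Real.sqrt (γ / (c ⬝ᵥ Q *ᵥ c))) * c n| /
          (Real.sqrt (γ * (Q⁻¹) n n) + |c n|)) ≤
        (1 - Real.sqrt (γ / (c ⬝ᵥ Q *ᵥ c))) * N / 2 := by
  set s : ℝ := c ⬝ᵥ Q *ᵥ c with hs
  have hs_pos : 0 < s := lt_trans hγ h_out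
  set θ : ℝ := 1 - Real.sqrt (γ / s) with hθ
  have hdiv : 0 ≤ γ / s := le_of_lt (div_pos hγ hs_pos)
  have hdiv1 : γ / s < 1 := (div_lt_one hs_pos).mpr h_out
  have hsqrt1 : Real.sqrt (γ / s) ≤ 1 := by
    rw [show (1:ℝ) = Real.sqrt 1 by simp]
    exact Real.sqrt_le_sqrt (le_of_lt hdiv1)
  have hθ_nonneg : 0 ≤ θ := by simpa [hθ] using hsqrt1
  have hinv : (Q⁻¹).PosDef := hQ.inv
  have hdiag : ∀ n, 0 < (Q⁻¹) n n := fun n => by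
    have := hinv.dotProduct_mulVec_pos (x := Pi.single n 1) (by
      intro h; have := congrFun h n; simp at this)
    simpa [dotProduct, mulVec, Pi.single_apply, Finset.sum_ite_eq',
      Finset.sum_ite_eq] using this
  constructor
  · have hvec : θ • c - c = (-Real.sqrt (γ / s)) • c := by
      ext i; simp [hθ]; ring
    rw [hvec]
    rw [mulVec_smul, dotProduct_smul, smul_dotProduct, smul_eq_mul, smul_eq_mul,
      ← hs, show -Real.sqrt (γ / s) * (-Real.sqrt (γ / s) * s)
        = (Real.sqrt (γ / s))^2 * s by ring,
      Real.sq_sqrt hdiv, div_mul_cancel₀ _ (ne_of_gt hs_pos)]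
  · have hterm : ∀ n, |θ * c n| / (Real.sqrt (γ * (Q⁻¹) n n) + |c n|) ≤ θ / 2 := by
      intro n
      have hcn : |c n| ≤ Real.sqrt (γ * (Q⁻¹) n n) := by
        have h1 : c n ^ 2 ≤ γ * (Q⁻¹) n n :=
          (div_le_iff₀ (hdiag n)).mp (h_feas n)
        calc |c n| = Real.sqrt (c n ^ 2) := (Real.sqrt_sq_eq_abs _).symm
          _ ≤ _ := Real.sqrt_le_sqrt h1
      have hden : 0 < Real.sqrt (γ * (Q⁻¹) n n) + |c n| := by
        have : 0 < Real.sqrt (γ * (Q⁻¹) n n) :=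
          Real.sqrt_pos.mpr (mul_pos hγ (hdiag n))
        positivity
      rw [div_le_div_iff₀ hden (by norm_num : (0:ℝ) < 2), abs_mul,
        abs_of_nonneg hθ_nonneg]
      have : |c n| * 2 ≤ Real.sqrt (γ * (Q⁻¹) n n) + |c n| := by linarith
      calc θ * |c n| * 2 = θ * (|c n| * 2) := by ring
        _ ≤ θ * (Real.sqrt (γ * (Q⁻¹) n n) + |c n|) :=
            mul_le_mul_of_nonneg_left this hθ_nonneg
    calc (∑ n, |θ * c n| / (Real.sqrt (γ * (Q⁻¹) n n) + |c n|))
        ≤ ∑ _n : Fin N, θ / 2 := Finset.sum_le_sum fun n _ => hterm n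
      _ = θ * N / 2 := by simp [Finset.sum_const]; ring
end

section
/- Let Q = (I+Δ)Λ(I+Δ)ᵀ where I+Δ is orthogonal and Λ is positive definite diagonal, and suppose κ(Q)·ρ(Δ) < 1 where κ(Q) is the condition number of Q and ρ(Δ) the spectral radius of Δ. Then λ_min(Λ^{-1/2} Q Λ^{-1/2}) ≥ 1 − κ(Q)ρ(Δ) and λ_max(Λ^{-1/2} Q Λ^{-1/2}) ≤ 1 + κ(Q)(ρ(Δ) + ρ(Δ)²). -/
open Matrix

private lemma dot_self_nonneg' {N : ℕ} (x : Fin N → ℝ) : 0 ≤ x ⬝ᵥ x :=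
  Finset.sum_nonneg fun i _ => mul_self_nonneg _

private lemma cauchy' {N : ℕ} (x z : Fin N → ℝ) : (x ⬝ᵥ z) ^ 2 ≤ (x ⬝ᵥ x) * (z ⬝ᵥ z) := by
  have := Finset.sum_mul_sq_le_sq_mul_sq Finset.univ x z
  simpa [dotProduct, pow_two] using this

private lemma dotsym {N : ℕ} (A : Matrix (Fin N) (Fin N) ℝ) (v z : Fin N → ℝ) :
    v ⬝ᵥ (A *ᵥ z) = (Aᵀ *ᵥ v) ⬝ᵥ z := by
  rw [Matrix.dotProduct_mulVec, Matrix.mulVec_transpose]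

open scoped ComplexOrder in
/-- Any real eigenvalue of `Δᵀ * Δ` is at most `r ^ 2`, where `r` bounds the moduli of the
complex eigenvalues of `Δ`, assuming `Δ` commutes with `Δᵀ * Δ`. -/
private lemma eig_le {N : ℕ} (Δ : Matrix (Fin N) (Fin N) ℝ)
    (hcomm : Δ * (Δᵀ * Δ) = (Δᵀ * Δ) * Δ)
    (r : ℝ)
    (hub : ∀ t ∈ {t : ℝ | ∃ (ψ : ℂ) (v : Fin N → ℂ), v ≠ 0 ∧
        (Δ.map (fun x : ℝ => (x : ℂ))) *ᵥ v = ψ • v ∧ t = ‖ψ‖}, t ≤ r)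
    (μ : ℝ) (u : Fin N → ℝ) (hu : u ≠ 0) (hSu : (Δᵀ * Δ) *ᵥ u = μ • u) :
    μ ≤ r ^ 2 := by
  classical
  set c : ℝ →+* ℂ := Complex.ofRealHom with hc
  have hmapvec : ∀ (A : Matrix (Fin N) (Fin N) ℝ) (x : Fin N → ℝ),
      (A.map c) *ᵥ (fun i => (x i : ℂ)) = fun i => ((A *ᵥ x) i : ℂ) := by
    intro A x
    ext i
    simp only [Matrix.mulVec, dotProduct, Matrix.map_apply]
    push_cast
    rfl
  set C : Matrix (Fin N) (Fin N) ℂ := Δ.map c with hC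
  have hCmap : Δ.map (fun x : ℝ => (x : ℂ)) = C := rfl
  set Sc : Matrix (Fin N) (Fin N) ℂ := (Δᵀ * Δ).map c with hSc
  have hcommC : C * Sc = Sc * C := by
    rw [hC, hSc, ← Matrix.map_mul, ← Matrix.map_mul, hcomm]
  set E := Module.End.eigenspace (Matrix.toLin' Sc) (μ : ℂ) with hE
  have hinv : ∀ x ∈ E, Matrix.toLin' C x ∈ E := by
    intro x hx
    rw [hE, Module.End.mem_eigenspace_iff] at hx ⊢
    simp only [Matrix.toLin'_apply] at hx ⊢
    rw [Matrix.mulVec_mulVec, ← hcommC, ← Matrix.mulVec_mulVec, hx, Matrix.mulVec_smul]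
  have huC : (fun i => (u i : ℂ)) ∈ E := by
    rw [hE, Module.End.mem_eigenspace_iff]
    simp only [Matrix.toLin'_apply]
    rw [hSc, hmapvec, hSu]
    ext i
    simp [Complex.ofReal_mul]
  have hne : (fun i => (u i : ℂ)) ≠ 0 := by
    intro h
    apply hu
    ext i
    exact Complex.ofReal_eq_zero.mp (by simpa using congr_fun h i)
  haveI : Nontrivial E := nontrivial_of_ne ⟨_, huC⟩ 0 (by
    intro h
    exact hne (congrArg Subtype.val h))
  obtain ⟨ψ, hψ⟩ := Module.End.exists_eigenvalue ((Matrix.toLin' C).restrict hinv)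
  obtain ⟨⟨w, hwE⟩, hwv⟩ := hψ.exists_hasEigenvector
  have hw0 : w ≠ 0 := by
    intro h
    exact hwv.2 (by simp [Subtype.ext_iff, h])
  have hCw : C *ᵥ w = ψ • w := by
    have h1 := hwv.apply_eq_smul
    have h2 := congrArg Subtype.val h1
    simpa [LinearMap.restrict_coe_apply, Matrix.toLin'_apply] using h2
  have hScw : Sc *ᵥ w = (μ : ℂ) • w := by
    have := Module.End.mem_eigenspace_iff.mp hwE
    simpa [Matrix.toLin'_apply] using this
  have hScCC : Sc = Cᴴ * C := by
    rw [hSc, Matrix.map_mul]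
    congr 1
    ext i j
    simp [hc, hC, Matrix.conjTranspose_apply, Matrix.map_apply, Complex.conj_ofReal]
  have hd : star w ⬝ᵥ w ≠ 0 := fun h => hw0 (dotProduct_star_self_eq_zero.mp h)
  have hconj : star ψ * ψ = ((‖ψ‖ ^ 2 : ℝ) : ℂ) := by
    rw [RCLike.star_def, mul_comm, Complex.mul_conj]
    norm_cast
    exact (Complex.sq_norm ψ).symm
  have key : (μ : ℂ) = ((‖ψ‖ ^ 2 : ℝ) : ℂ) := by
    have h1 : star w ⬝ᵥ (Sc *ᵥ w) = (μ : ℂ) * (star w ⬝ᵥ w) := by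
      rw [hScw, dotProduct_smul, smul_eq_mul]
    have h2 : star w ⬝ᵥ (Sc *ᵥ w) = ((‖ψ‖ ^ 2 : ℝ) : ℂ) * (star w ⬝ᵥ w) := by
      rw [hScCC, ← Matrix.mulVec_mulVec, Matrix.dotProduct_mulVec, ← Matrix.star_mulVec, hCw,
        star_smul, smul_dotProduct, dotProduct_smul, smul_eq_mul, smul_eq_mul,
        ← mul_assoc, hconj]
    exact mul_right_cancel₀ hd (h1.symm.trans h2)
  have hψr : ‖ψ‖ ≤ r := hub _ ⟨ψ, w, hw0, by rw [hCmap]; exact hCw, rfl⟩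
  have hμ : μ = ‖ψ‖ ^ 2 := by exact_mod_cast key
  rw [hμ]
  exact pow_le_pow_left₀ (norm_nonneg _) hψr 2

private lemma quad_le {N : ℕ} (Δ : Matrix (Fin N) (Fin N) ℝ)
    (hcomm' : Δ * Δᵀ = Δᵀ * Δ)
    (r : ℝ)
    (hub : ∀ t ∈ {t : ℝ | ∃ (ψ : ℂ) (v : Fin N → ℂ), v ≠ 0 ∧
        (Δ.map (fun x : ℝ => (x : ℂ))) *ᵥ v = ψ • v ∧ t = ‖ψ‖}, t ≤ r) :
    ∀ x : Fin N → ℝ, x ⬝ᵥ ((Δᵀ * Δ) *ᵥ x) ≤ r ^ 2 * (x ⬝ᵥ x) := by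
  classical
  have hcomm : Δ * (Δᵀ * Δ) = (Δᵀ * Δ) * Δ := by
    rw [← Matrix.mul_assoc, hcomm']
  set S : Matrix (Fin N) (Fin N) ℝ := Δᵀ * Δ with hS
  have hSherm : S.IsHermitian := by
    show Sᴴ = S
    ext i j
    simp only [Matrix.conjTranspose_apply, Matrix.mul_apply, Matrix.transpose_apply, hS,
      star_trivial]
    exact Finset.sum_congr rfl fun k _ => mul_comm _ _
  set T : Matrix (Fin N) (Fin N) ℝ := r ^ 2 • (1 : Matrix (Fin N) (Fin N) ℝ) - S with hT
  have hTherm : T.IsHermitian := by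
    show Tᴴ = T
    rw [hT, Matrix.conjTranspose_sub, Matrix.conjTranspose_smul, Matrix.conjTranspose_one, hSherm]
    simp
  have hTmul : ∀ x : Fin N → ℝ, T *ᵥ x = r ^ 2 • x - S *ᵥ x := by
    intro x
    rw [hT, Matrix.sub_mulVec, Matrix.smul_mulVec, Matrix.one_mulVec]
  have hTpsd : T.PosSemidef := by
    apply (Matrix.IsHermitian.posSemidef_iff_eigenvalues_nonneg hTherm).mpr
    intro i
    set u : Fin N → ℝ := ⇑(hTherm.eigenvectorBasis i) with hu
    have hu0 : u ≠ 0 := by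
      have hne := hTherm.eigenvectorBasis.orthonormal.ne_zero i
      intro h
      apply hne
      ext j
      exact congr_fun h j
    have hTu : T *ᵥ u = hTherm.eigenvalues i • u := hTherm.mulVec_eigenvectorBasis i
    have hSu : S *ᵥ u = (r ^ 2 - hTherm.eigenvalues i) • u := by
      have h1 := hTmul u
      rw [hTu] at h1
      rw [sub_smul]
      rw [eq_sub_iff_add_eq] at h1 ⊢
      rw [← h1]
      abel
    have := eig_le Δ hcomm r hub _ u hu0 hSu
    show (0:ℝ) ≤ hTherm.eigenvalues i
    linarith
  intro x
  have h0 := hTpsd.dotProduct_mulVec_nonneg x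
  have hstar : star x = x := by
    ext i; simp
  rw [hstar, hTmul] at h0
  rw [dotProduct_sub, dotProduct_smul, smul_eq_mul] at h0
  linarith

set_option maxHeartbeats 1000000 in
/-- Lemma 4: For `Q = (I+Δ)Λ(I+Δ)ᵀ` with `I+Δ` orthogonal, `Λ` positive
definite diagonal, condition number `κ = lmax/lmin`, and spectral radius `ρ(Δ) = r` with
`κr < 1`, the eigenvalues of `Λ^{-1/2}QΛ^{-1/2}` lie in `[1 − κr, 1 + κ(r + r²)]`
(stated via quadratic forms). -/
theorem nearly_aligned_eigenvalue_bounds {N : ℕ}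
    (Δ : Matrix (Fin N) (Fin N) ℝ)
    (horth : (1 + Δ)ᵀ * (1 + Δ) = 1)
    (l : Fin N → ℝ) (hl : ∀ n, 0 < l n)
    (lmin lmax : ℝ)
    (hlmin : IsLeast (Set.range l) lmin)
    (hlmax : IsGreatest (Set.range l) lmax)
    (r : ℝ)
    (hr : IsGreatest {t : ℝ | ∃ (ψ : ℂ) (v : Fin N → ℂ), v ≠ 0 ∧
        (Δ.map (fun x : ℝ => (x : ℂ))) *ᵥ v = ψ • v ∧ t = ‖ψ‖} r)
    (hκr : (lmax / lmin) * r < 1) :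
    ∀ y : Fin N → ℝ,
      (1 - (lmax / lmin) * r) * (y ⬝ᵥ y) ≤
          y ⬝ᵥ (Matrix.diagonal (fun n => 1 / Real.sqrt (l n)) *
            ((1 + Δ) * Matrix.diagonal l * (1 + Δ)ᵀ) *
            Matrix.diagonal (fun n => 1 / Real.sqrt (l n))) *ᵥ y ∧
        y ⬝ᵥ (Matrix.diagonal (fun n => 1 / Real.sqrt (l n)) *
            ((1 + Δ) * Matrix.diagonal l * (1 + Δ)ᵀ) *
            Matrix.diagonal (fun n => 1 / Real.sqrt (l n))) *ᵥ y ≤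
          (1 + (lmax / lmin) * (r + r ^ 2)) * (y ⬝ᵥ y) := by
  classical
  obtain ⟨n₀, hn₀⟩ := hlmin.1
  have hlmin_pos : 0 < lmin := hn₀ ▸ hl n₀
  have hminmax : lmin ≤ lmax := by
    rw [← hn₀]
    exact hlmax.2 ⟨n₀, rfl⟩
  have hlmax_pos : 0 < lmax := lt_of_lt_of_le hlmin_pos hminmax
  have hr0 : 0 ≤ r := by
    obtain ⟨ψ, v, -, -, ht⟩ := hr.1
    rw [ht]
    exact norm_nonneg _
  have hκr' : lmax * r < lmin := by
    rw [div_mul_eq_mul_div] at hκr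
    exact (div_lt_one hlmin_pos).mp hκr
  -- orthogonality identities
  have e1 : Δ + Δᵀ + Δᵀ * Δ = 0 := by
    have h2 : (1 + Δ)ᵀ * (1 + Δ) = 1 + (Δ + Δᵀ + Δᵀ * Δ) := by
      simp only [Matrix.transpose_add, Matrix.transpose_one]
      noncomm_ring
    exact add_left_cancel ((h2.symm.trans horth).trans (add_zero 1).symm)
  have e2 : Δ + Δᵀ + Δ * Δᵀ = 0 := by
    have h1 : (1 + Δ) * (1 + Δ)ᵀ = 1 := mul_eq_one_comm.mp horth
    have h2 : (1 + Δ) * (1 + Δ)ᵀ = 1 + (Δ + Δᵀ + Δ * Δᵀ) := by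
      simp only [Matrix.transpose_add, Matrix.transpose_one]
      noncomm_ring
    exact add_left_cancel ((h2.symm.trans h1).trans (add_zero 1).symm)
  have hcomm' : Δ * Δᵀ = Δᵀ * Δ := by
    have h : Δ + Δᵀ + Δ * Δᵀ = Δ + Δᵀ + Δᵀ * Δ := by rw [e1, e2]
    exact add_left_cancel h
  have hquad := quad_le Δ hcomm' r hr.2
  intro y
  set s : Fin N → ℝ := fun n => 1 / Real.sqrt (l n) * y n with hs
  set t : Fin N → ℝ := Δᵀ *ᵥ s with ht
  set D : Matrix (Fin N) (Fin N) ℝ := Matrix.diagonal (fun n => 1 / Real.sqrt (l n)) with hD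
  have hDy : D *ᵥ y = s := by
    ext n
    rw [hD, Matrix.mulVec_diagonal]
  -- rewrite the quadratic form
  have hF : y ⬝ᵥ (D * ((1 + Δ) * Matrix.diagonal l * (1 + Δ)ᵀ) * D) *ᵥ y
      = (s + t) ⬝ᵥ (Matrix.diagonal l *ᵥ (s + t)) := by
    simp only [← Matrix.mulVec_mulVec]
    rw [dotsym D, hD, Matrix.diagonal_transpose, ← hD, hDy, dotsym (1 + Δ) s]
    rw [show (1 + Δ)ᵀ *ᵥ s = s + t by
      rw [Matrix.transpose_add, Matrix.transpose_one, Matrix.add_mulVec, Matrix.one_mulVec, ht]]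
  have hexp : (s + t) ⬝ᵥ (Matrix.diagonal l *ᵥ (s + t)) =
      (∑ n, l n * s n * s n) + 2 * (∑ n, l n * s n * t n) + (∑ n, l n * t n * t n) := by
    simp only [dotProduct, Matrix.mulVec_diagonal, Pi.add_apply, Finset.mul_sum,
      ← Finset.sum_add_distrib]
    exact Finset.sum_congr rfl fun n _ => by ring
  -- named quantities
  set ds : ℝ := s ⬝ᵥ ((Δᵀ * Δ) *ᵥ s) with hdsdef
  have hss0 : 0 ≤ s ⬝ᵥ s := dot_self_nonneg' s
  have hY0 : 0 ≤ y ⬝ᵥ y := dot_self_nonneg' y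
  have hdseq : ds = (Δ *ᵥ s) ⬝ᵥ (Δ *ᵥ s) := by
    rw [hdsdef, ← Matrix.mulVec_mulVec, dotsym Δᵀ, Matrix.transpose_transpose]
  have hds0 : 0 ≤ ds := hdseq ▸ dot_self_nonneg' _
  have hdsr : ds ≤ r ^ 2 * (s ⬝ᵥ s) := hquad s
  have htteq : t ⬝ᵥ t = ds := by
    calc t ⬝ᵥ t = t ⬝ᵥ (Δᵀ *ᵥ s) := by rw [← ht]
      _ = (Δ *ᵥ t) ⬝ᵥ s := by rw [dotsym Δᵀ, Matrix.transpose_transpose]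
      _ = (Δ *ᵥ (Δᵀ *ᵥ s)) ⬝ᵥ s := by rw [← ht]
      _ = ((Δᵀ * Δ) *ᵥ s) ⬝ᵥ s := by rw [Matrix.mulVec_mulVec, hcomm']
      _ = ds := by rw [hdsdef, dotProduct_comm]
  -- cross term identity
  have hst : 2 * (s ⬝ᵥ t) = -ds := by
    have h2 : s ⬝ᵥ (Δ *ᵥ s) = s ⬝ᵥ (Δᵀ *ᵥ s) := by
      rw [dotsym Δ s s, dotProduct_comm]
    have h3 : s ⬝ᵥ (Δ *ᵥ s) + s ⬝ᵥ (Δᵀ *ᵥ s) + ds = 0 := by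
      have h4 : s ⬝ᵥ ((Δ + Δᵀ + Δᵀ * Δ) *ᵥ s) = 0 := by
        rw [e1, Matrix.zero_mulVec, dotProduct_zero]
      rwa [Matrix.add_mulVec, Matrix.add_mulVec, dotProduct_add,
        dotProduct_add, ← hdsdef] at h4
    have h5 : s ⬝ᵥ t = s ⬝ᵥ (Δᵀ *ᵥ s) := by rw [ht]
    linarith
  -- q vector
  set qv : Fin N → ℝ := fun n => (l n - (lmax + lmin) / 2) * s n with hq
  have hqq : qv ⬝ᵥ qv ≤ ((lmax - lmin) / 2) ^ 2 * (s ⬝ᵥ s) := by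
    simp only [dotProduct, Finset.mul_sum]
    apply Finset.sum_le_sum
    intro n _
    have h1 : lmin ≤ l n := hlmin.2 ⟨n, rfl⟩
    have h2 : l n ≤ lmax := hlmax.2 ⟨n, rfl⟩
    simp only [hq]
    nlinarith [sq_nonneg (s n), mul_nonneg (mul_nonneg (sub_nonneg.2 h2) (sub_nonneg.2 h1))
      (mul_self_nonneg (s n))]
  have htt' : t ⬝ᵥ t ≤ r ^ 2 * (s ⬝ᵥ s) := htteq ▸ hdsr
  have hqt : |qv ⬝ᵥ t| ≤ ((lmax - lmin) / 2) * r * (s ⬝ᵥ s) := by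
    have hb0 : 0 ≤ ((lmax - lmin) / 2) * r * (s ⬝ᵥ s) := by
      apply mul_nonneg (mul_nonneg (by linarith) hr0) hss0
    have h1 : (qv ⬝ᵥ t) ^ 2 ≤ (((lmax - lmin) / 2) * r * (s ⬝ᵥ s)) ^ 2 := by
      calc (qv ⬝ᵥ t) ^ 2 ≤ (qv ⬝ᵥ qv) * (t ⬝ᵥ t) := cauchy' qv t
        _ ≤ (((lmax - lmin) / 2) ^ 2 * (s ⬝ᵥ s)) * (r ^ 2 * (s ⬝ᵥ s)) := by
            apply mul_le_mul hqq htt' (dot_self_nonneg' t)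
            apply mul_nonneg (sq_nonneg _) hss0
        _ = (((lmax - lmin) / 2) * r * (s ⬝ᵥ s)) ^ 2 := by ring
    calc |qv ⬝ᵥ t| = Real.sqrt ((qv ⬝ᵥ t) ^ 2) := (Real.sqrt_sq_eq_abs _).symm
      _ ≤ Real.sqrt ((((lmax - lmin) / 2) * r * (s ⬝ᵥ s)) ^ 2) := Real.sqrt_le_sqrt h1
      _ = ((lmax - lmin) / 2) * r * (s ⬝ᵥ s) := Real.sqrt_sq hb0
  have hcross : (∑ n, l n * s n * t n) = ((lmax + lmin) / 2) * (s ⬝ᵥ t) + qv ⬝ᵥ t := by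
    simp only [dotProduct, Finset.mul_sum, ← Finset.sum_add_distrib, hq]
    exact Finset.sum_congr rfl fun n _ => by ring
  have hA : (∑ n, l n * s n * s n) = y ⬝ᵥ y := by
    simp only [dotProduct, hs]
    apply Finset.sum_congr rfl
    intro n _
    have h1 : Real.sqrt (l n) ^ 2 = l n := Real.sq_sqrt (hl n).le
    have h2 : Real.sqrt (l n) ≠ 0 := ne_of_gt (Real.sqrt_pos.mpr (hl n))
    calc l n * (1 / Real.sqrt (l n) * y n) * (1 / Real.sqrt (l n) * y n)
        = Real.sqrt (l n) ^ 2 * (1 / Real.sqrt (l n) * y n) * (1 / Real.sqrt (l n) * y n) := by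
          rw [h1]
      _ = y n * y n := by field_simp
  have h30 : 0 ≤ ∑ n, l n * t n * t n := by
    apply Finset.sum_nonneg
    intro n _
    rw [mul_assoc]
    exact mul_nonneg (hl n).le (mul_self_nonneg _)
  have h3u : (∑ n, l n * t n * t n) ≤ lmax * (t ⬝ᵥ t) := by
    simp only [dotProduct, Finset.mul_sum]
    apply Finset.sum_le_sum
    intro n _
    have h2 : l n ≤ lmax := hlmax.2 ⟨n, rfl⟩
    nlinarith [mul_self_nonneg (t n)]
  have hssY : lmin * (s ⬝ᵥ s) ≤ y ⬝ᵥ y := by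
    simp only [dotProduct, Finset.mul_sum, hs]
    apply Finset.sum_le_sum
    intro n _
    have h1 : Real.sqrt (l n) ^ 2 = l n := Real.sq_sqrt (hl n).le
    have h2 : 0 < Real.sqrt (l n) := Real.sqrt_pos.mpr (hl n)
    have h3 : lmin ≤ l n := hlmin.2 ⟨n, rfl⟩
    have h4 : (1 / Real.sqrt (l n) * y n) * (1 / Real.sqrt (l n) * y n) = y n ^ 2 / l n := by
      rw [show y n ^ 2 / l n = y n ^ 2 / Real.sqrt (l n) ^ 2 by rw [h1]]
      ring
    rw [h4, mul_div_assoc']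
    rw [div_le_iff₀ (hl n)]
    nlinarith [mul_nonneg (sub_nonneg.2 h3) (sq_nonneg (y n))]
  -- final bounds
  have hcds : ((lmax + lmin) / 2) * ds ≤ lmin * (r * (s ⬝ᵥ s)) := by
    nlinarith [mul_nonneg (show (0:ℝ) ≤ (lmax + lmin)/2 by linarith) (sub_nonneg.2 hdsr),
      mul_nonneg (sub_nonneg.2 hκr'.le) (mul_nonneg hr0 hss0),
      mul_nonneg (show (0:ℝ) ≤ (lmax - lmin)/2 by linarith)
        (mul_nonneg (mul_nonneg hr0 hr0) hss0)]
  have ht3 : (∑ n, l n * t n * t n) ≤ lmax * (r * (r * (s ⬝ᵥ s))) := by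
    have := mul_le_mul_of_nonneg_left htt' hlmax_pos.le
    calc (∑ n, l n * t n * t n) ≤ lmax * (t ⬝ᵥ t) := h3u
      _ ≤ lmax * (r ^ 2 * (s ⬝ᵥ s)) := this
      _ = lmax * (r * (r * (s ⬝ᵥ s))) := by ring
  have hκrY : lmax * (r * (s ⬝ᵥ s)) ≤ (lmax / lmin) * r * (y ⬝ᵥ y) := by
    rw [← sub_nonneg]
    have hid : (lmax / lmin) * r * (y ⬝ᵥ y) - lmax * (r * (s ⬝ᵥ s)) =
        (lmax * r) * ((y ⬝ᵥ y) - lmin * (s ⬝ᵥ s)) / lmin := by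
      field_simp
    rw [hid]
    apply div_nonneg _ hlmin_pos.le
    exact mul_nonneg (mul_nonneg hlmax_pos.le hr0) (sub_nonneg.2 hssY)
  have hκrY2 : (lmax - lmin) * (r * (s ⬝ᵥ s)) + lmax * (r * (r * (s ⬝ᵥ s))) ≤
      (lmax / lmin) * (r + r ^ 2) * (y ⬝ᵥ y) := by
    rw [← sub_nonneg]
    have hid : (lmax / lmin) * (r + r ^ 2) * (y ⬝ᵥ y) -
        ((lmax - lmin) * (r * (s ⬝ᵥ s)) + lmax * (r * (r * (s ⬝ᵥ s)))) =
        (lmax * (r + r ^ 2)) * ((y ⬝ᵥ y) - lmin * (s ⬝ᵥ s)) / lmin + lmin * (r * (s ⬝ᵥ s)) := by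
      field_simp
      ring
    rw [hid]
    have hp1 : 0 ≤ (lmax * (r + r ^ 2)) * ((y ⬝ᵥ y) - lmin * (s ⬝ᵥ s)) / lmin := by
      apply div_nonneg _ hlmin_pos.le
      apply mul_nonneg (mul_nonneg hlmax_pos.le (by positivity)) (sub_nonneg.2 hssY)
    have hp2 : 0 ≤ lmin * (r * (s ⬝ᵥ s)) :=
      mul_nonneg hlmin_pos.le (mul_nonneg hr0 hss0)
    linarith
  -- assemble
  have hqtl := (abs_le.mp hqt).1
  have hqtu := (abs_le.mp hqt).2
  have hc2 : ((lmax + lmin) / 2) * (2 * (s ⬝ᵥ t)) = ((lmax + lmin) / 2) * (-ds) := by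
    rw [hst]
  have hFval : y ⬝ᵥ (D * ((1 + Δ) * Matrix.diagonal l * (1 + Δ)ᵀ) * D) *ᵥ y =
      (y ⬝ᵥ y) + (((lmax + lmin) / 2) * (2 * (s ⬝ᵥ t)) + 2 * (qv ⬝ᵥ t)) +
      (∑ n, l n * t n * t n) := by
    rw [hF, hexp, hA, hcross]
    ring
  rw [hFval, hc2]
  constructor
  · nlinarith [hcds, hqtl, h30, hκrY, hds0,
      mul_nonneg (show (0:ℝ) ≤ (lmax + lmin)/2 by linarith) hds0]
  · nlinarith [hqtu, ht3, hκrY2, hds0,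
      mul_nonneg (show (0:ℝ) ≤ (lmax + lmin)/2 by linarith) hds0]
end
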